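/- arXiv:0803.3868 — 6 statements merged into one kernel-verified Lean document; each statement's English description precedes it below -/
import Mathlib

section
/- If a finite group G has a subnormal series in which every factor is either a π-group or a π'-group, then G contains a π-Hall subgroup. -/
/-- `n` is a `π`-number: every prime divisor of `n` lies in `π`. -/
def IsPiNumber (π : Set ℕ) (n : ℕ) : Prop := ∀ p : ℕ, p.Prime → p ∣ n → p ∈ π

/-- `H` is a `π`-Hall subgroup of `G`: `|H|` is a `π`-number and `|G : H|` is a `π'`-number. -/
def IsPiHall (π : Set ℕ) {G : Type*} [Group G] (H : Subgroup G) : Prop :=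
  IsPiNumber π (Nat.card H) ∧ ∀ p : ℕ, p.Prime → p ∣ H.index → p ∉ π

open Subgroup Pointwise

lemma isPiNumber_of_dvd {π : Set ℕ} {m n : ℕ} (h : m ∣ n) (hn : IsPiNumber π n) :
    IsPiNumber π m := fun p hp hd => hn p hp (hd.trans h)

lemma isPiNumber_mul {π : Set ℕ} {m n : ℕ} (hm : IsPiNumber π m) (hn : IsPiNumber π n) :
    IsPiNumber π (m * n) := fun p hp hd => ((Nat.Prime.dvd_mul hp).mp hd).elim (hm p hp) (hn p hp)

lemma isPiNumber_one {π : Set ℕ} : IsPiNumber π 1 := by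
  intro p hp hd
  exact absurd (Nat.dvd_one.mp hd) hp.ne_one

-- key fact from subgroupOf-normality
lemma conj_mem_of_normal_subgroupOf {G : Type*} [Group G] {A B : Subgroup G} (hAB : A ≤ B)
    (hN : (A.subgroupOf B).Normal) {a b : G} (ha : a ∈ A) (hb : b ∈ B) : b * a * b⁻¹ ∈ A := by
  have := hN.conj_mem ⟨a, hAB ha⟩ (mem_subgroupOf.mpr ha) ⟨b, hb⟩
  simpa [mem_subgroupOf] using this

lemma conj_smul_eq {G : Type*} [Group G] {A B : Subgroup G} (hAB : A ≤ B)
    (hN : (A.subgroupOf B).Normal) {g : G} (hg : g ∈ B) : MulAut.conj g • A = A := by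
  apply le_antisymm
  · intro x hx
    rw [mem_pointwise_smul_iff_inv_smul_mem] at hx
    have hx' : g⁻¹ * x * g ∈ A := by simpa [MulAut.smul_def] using hx
    have := conj_mem_of_normal_subgroupOf hAB hN hx' hg
    have he : g * (g⁻¹ * x * g) * g⁻¹ = x := by group
    rwa [he] at this
  · intro x hx
    rw [mem_pointwise_smul_iff_inv_smul_mem]
    have := conj_mem_of_normal_subgroupOf hAB hN hx (inv_mem hg)
    simpa [MulAut.smul_def, mul_assoc] using this

lemma mem_normalizer_iff_smul {G : Type*} [Group G] {H : Subgroup G} {x : G} :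
    x ∈ normalizer (H : Set G) ↔ MulAut.conj x • H = H := by
  constructor
  · intro hx
    ext y
    rw [mem_pointwise_smul_iff_inv_smul_mem]
    have h1 := (mem_normalizer_iff.mp hx) (x⁻¹ * y * x)
    have he : x * (x⁻¹ * y * x) * x⁻¹ = y := by group
    rw [he] at h1
    simpa [MulAut.smul_def] using h1
  · intro hs
    rw [mem_normalizer_iff]
    intro h
    constructor
    · intro hh
      rw [← hs, mem_pointwise_smul_iff_inv_smul_mem]
      simpa [MulAut.smul_def, mul_assoc] using hh
    · intro hh
      rw [← hs, mem_pointwise_smul_iff_inv_smul_mem] at hh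
      simpa [MulAut.smul_def, mul_assoc] using hh

lemma card_sup_dvd {G : Type*} [Group G] [Finite G] {M₁ M₂ : Subgroup G}
    (h : M₁ ≤ normalizer (M₂ : Set G)) :
    Nat.card ((M₁ ⊔ M₂ : Subgroup G)) ∣ Nat.card M₁ * Nat.card M₂ := by
  set L := normalizer (M₂ : Set G) with hL
  have h2 : M₂ ≤ L := le_normalizer
  have hsupL : M₁ ⊔ M₂ ≤ L := sup_le h h2
  set A := M₁.subgroupOf L
  set B := M₂.subgroupOf L
  haveI hBn : B.Normal := normal_in_normalizer
  have e := QuotientGroup.quotientInfEquivProdNormalQuotient A B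
  have hsub : (M₁ ⊔ M₂).subgroupOf L = A ⊔ B := subgroupOf_sup h h2
  -- card (A ⊔ B) = card quot * card (B.subgroupOf (A ⊔ B))
  have hq := card_eq_card_quotient_mul_card_subgroup (B.subgroupOf (A ⊔ B))
  have hqd : Nat.card (↥(A ⊔ B) ⧸ B.subgroupOf (A ⊔ B)) ∣ Nat.card M₁ := by
    have h1 : Nat.card (↥(A ⊔ B) ⧸ B.subgroupOf (A ⊔ B)) = Nat.card (↥A ⧸ B.subgroupOf A) :=
      Nat.card_congr e.symm.toEquiv
    rw [h1]
    have h2' : Nat.card (↥A ⧸ B.subgroupOf A) ∣ Nat.card A :=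
      Subgroup.card_dvd_of_surjective _ (QuotientGroup.mk'_surjective _)
    have h3 : Nat.card A = Nat.card M₁ := Nat.card_congr (subgroupOfEquivOfLe h).toEquiv
    rwa [h3] at h2'
  have hBsub : Nat.card (B.subgroupOf (A ⊔ B)) = Nat.card M₂ := by
    have h1 : Nat.card (B.subgroupOf (A ⊔ B)) = Nat.card B :=
      Nat.card_congr (subgroupOfEquivOfLe le_sup_right).toEquiv
    rw [h1]
    exact Nat.card_congr (subgroupOfEquivOfLe h2).toEquiv
  have hAB : Nat.card ((M₁ ⊔ M₂ : Subgroup G)) = Nat.card (↥(A ⊔ B)) := by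
    rw [← hsub]
    exact (Nat.card_congr (subgroupOfEquivOfLe hsupL).toEquiv).symm
  rw [hAB, hq, hBsub]
  exact Nat.mul_dvd_mul hqd dvd_rfl

lemma normalizer_bot' {G : Type*} [Group G] : normalizer ((⊥ : Subgroup G) : Set G) = ⊤ := by
  rw [eq_top_iff]
  intro x _
  rw [mem_normalizer_iff]
  intro h
  simp only [mem_bot]
  constructor
  · rintro rfl; group
  · intro he
    have := congrArg (fun z => x⁻¹ * z * x) he
    simpa [mul_assoc] using this

lemma smul_iSup' {G : Type*} [Group G] {ι : Sort*} (a : MulAut G) (f : ι → Subgroup G) :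
    a • (⨆ i, f i) = ⨆ i, a • f i := by
  simp only [pointwise_smul_def]
  exact Subgroup.map_iSup _ _

lemma step_lemma {G : Type*} [Group G] [Finite G] (π : Set ℕ) {K K' P : Subgroup G}
    (hKK' : K ≤ K') (hN : (K.subgroupOf K').Normal) (hPK : P ≤ K)
    (hKnorm : K ≤ normalizer (P : Set G)) (hπ : IsPiNumber π (Nat.card P)) :
    ∃ P' : Subgroup G, P ≤ P' ∧ P' ≤ K ∧ K' ≤ normalizer (P' : Set G) ∧
      IsPiNumber π (Nat.card P') := by
  haveI : Fintype ↥K' := Fintype.ofFinite _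
  set f : ↥K' → Subgroup G := fun g => MulAut.conj (g : G) • P with hf
  have hKfix : ∀ g : ↥K', MulAut.conj (g : G) • K = K := fun g => conj_smul_eq hKK' hN g.2
  have hconjK : ∀ (g : ↥K') {h : G}, h ∈ K → (g : G)⁻¹ * h * (g : G) ∈ K := by
    intro g h hh
    have h1 : (g : G)⁻¹ * h * (g : G) ∈ MulAut.conj ((g : G))⁻¹ • K := by
      rw [mem_smul_pointwise_iff_exists]
      exact ⟨h, hh, by simp [MulAut.smul_def, mul_assoc]⟩
    have h2 : MulAut.conj ((g : G))⁻¹ • K = K := by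
      have := hKfix ⟨(g : G)⁻¹, inv_mem g.2⟩
      simpa using this
    rwa [h2] at h1
  have hQf : ∀ g : ↥K', f g ≤ K ∧ K ≤ normalizer ((f g : Subgroup G) : Set G) ∧ IsPiNumber π (Nat.card (f g)) := by
    intro g
    refine ⟨?_, ?_, ?_⟩
    · calc f g ≤ MulAut.conj (g : G) • K := pointwise_smul_le_pointwise_smul_iff.mpr hPK
        _ = K := hKfix g
    · intro h hh
      rw [mem_normalizer_iff_smul]
      have hmem : (g : G)⁻¹ * h * (g : G) ∈ K := hconjK g hh
      have hP2 : MulAut.conj ((g : G)⁻¹ * h * (g : G)) • P = P :=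
        mem_normalizer_iff_smul.mp (hKnorm hmem)
      have hcomm : h * (g : G) = (g : G) * ((g : G)⁻¹ * h * (g : G)) := by group
      calc MulAut.conj h • f g = MulAut.conj (h * (g : G)) • P := by
            rw [hf]; simp only [map_mul, mul_smul]
        _ = MulAut.conj ((g : G) * ((g : G)⁻¹ * h * (g : G))) • P := by rw [hcomm]
        _ = MulAut.conj (g : G) • (MulAut.conj ((g : G)⁻¹ * h * (g : G)) • P) := by
            rw [map_mul, mul_smul]
        _ = f g := by rw [hP2]
    · have : Nat.card (f g) = Nat.card P :=
        (Nat.card_congr (equivSMul (MulAut.conj (g : G)) P).toEquiv).symm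
      rwa [this]
  -- the property is preserved under joins
  have hQsup : ∀ H₁, (H₁ ≤ K ∧ K ≤ normalizer (H₁ : Set G) ∧ IsPiNumber π (Nat.card H₁)) →
      ∀ H₂, (H₂ ≤ K ∧ K ≤ normalizer (H₂ : Set G) ∧ IsPiNumber π (Nat.card H₂)) →
      (H₁ ⊔ H₂ ≤ K ∧ K ≤ normalizer ((H₁ ⊔ H₂ : Subgroup G) : Set G) ∧ IsPiNumber π (Nat.card (H₁ ⊔ H₂ : Subgroup G))) := by
    rintro H₁ ⟨h1K, hK1, hπ1⟩ H₂ ⟨h2K, hK2, hπ2⟩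
    refine ⟨sup_le h1K h2K, ?_, ?_⟩
    · intro h hh
      rw [mem_normalizer_iff_smul, smul_sup, mem_normalizer_iff_smul.mp (hK1 hh),
        mem_normalizer_iff_smul.mp (hK2 hh)]
    · have hdvd : Nat.card ((H₁ ⊔ H₂ : Subgroup G)) ∣ Nat.card H₁ * Nat.card H₂ :=
        card_sup_dvd (h1K.trans hK2)
      exact isPiNumber_of_dvd hdvd (isPiNumber_mul hπ1 hπ2)
  have hQbot : (⊥ : Subgroup G) ≤ K ∧ K ≤ normalizer ((⊥ : Subgroup G) : Set G) ∧
      IsPiNumber π (Nat.card (⊥ : Subgroup G)) := by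
    refine ⟨bot_le, ?_, ?_⟩
    · rw [normalizer_bot']; exact le_top
    · have : Nat.card (⊥ : Subgroup G) = 1 := Subgroup.card_bot
      rw [this]; exact isPiNumber_one
  set P' : Subgroup G := ⨆ g : ↥K', f g with hP'
  have hQP' : P' ≤ K ∧ K ≤ normalizer (P' : Set G) ∧ IsPiNumber π (Nat.card P') := by
    have heq : P' = Finset.univ.sup f := by rw [hP', Finset.sup_univ_eq_iSup]
    rw [heq]
    exact Finset.sup_induction (p := fun H => H ≤ K ∧ K ≤ normalizer (H : Set G) ∧ IsPiNumber π (Nat.card H)) hQbot hQsup (fun g _ => hQf g)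
  have hPP' : P ≤ P' := by
    have h1 : f 1 = P := by
      rw [hf]; simp
    calc P = f 1 := h1.symm
      _ ≤ P' := le_iSup f 1
  have hK'norm : K' ≤ normalizer (P' : Set G) := by
    intro h hh
    rw [mem_normalizer_iff_smul, hP', smul_iSup']
    have hstep : ∀ g : ↥K', MulAut.conj h • f g = f ((⟨h, hh⟩ : ↥K') * g) := by
      intro g
      rw [hf]
      simp only [← mul_smul, ← map_mul]
      rfl
    calc (⨆ g : ↥K', MulAut.conj h • f g) = ⨆ g : ↥K', f ((⟨h, hh⟩ : ↥K') * g) := by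
          exact iSup_congr hstep
      _ = ⨆ g : ↥K', f g := (Equiv.mulLeft (⟨h, hh⟩ : ↥K')).surjective.iSup_comp f
  exact ⟨P', hPP', hQP'.1, hK'norm, hQP'.2.2⟩

lemma exists_normal_aux {G : Type*} [Group G] [Finite G] (π : Set ℕ) (n : ℕ)
    (s : Fin (n + 1) → Subgroup G) (hn : s (Fin.last n) = ⊤)
    (hle : ∀ i : Fin n, s i.castSucc ≤ s i.succ)
    (hnorm : ∀ i : Fin n, ((s i.castSucc).subgroupOf (s i.succ)).Normal) :
    ∀ d (k : Fin (n + 1)), n = k.val + d → ∀ P : Subgroup G, P ≠ ⊥ →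
      IsPiNumber π (Nat.card P) → P ≤ s k → s k ≤ normalizer (P : Set G) →
      ∃ M : Subgroup G, M ≠ ⊥ ∧ M.Normal ∧ IsPiNumber π (Nat.card M) := by
  intro d
  induction d with
  | zero =>
    intro k hk P hP hπ hPle hPnorm
    have hk' : k = Fin.last n := by
      apply Fin.ext; simp [Fin.last]; omega
    rw [hk', hn] at hPnorm
    refine ⟨P, hP, ?_, hπ⟩
    exact normalizer_eq_top_iff.mp (top_le_iff.mp hPnorm)
  | succ d ih =>
    intro k hk P hP hπ hPle hPnorm
    have hkn : k.val < n := by omega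
    set i : Fin n := ⟨k.val, hkn⟩ with hi
    have hic : i.castSucc = k := by apply Fin.ext; simp [Fin.castSucc, hi]
    obtain ⟨P', hPP', hP'le, hP'norm, hπ'⟩ :=
      step_lemma π (K := s k) (K' := s i.succ) (P := P)
        (by rw [← hic]; exact hle i) (by rw [← hic] at *; exact hnorm i) hPle hPnorm hπ
    refine ih i.succ (by simp [Fin.succ, hi]; omega) P' ?_ hπ' (hP'le.trans (by rw [← hic]; exact hle i)) hP'norm
    intro hb
    exact hP (le_bot_iff.mp (hb ▸ hPP'))

lemma normal_map_subgroupOf {G H : Type*} [Group G] [Group H] (f : G →* H)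
    {A B : Subgroup G} (hAB : A ≤ B) (hN : (A.subgroupOf B).Normal) :
    ((Subgroup.map f A).subgroupOf (Subgroup.map f B)).Normal := by
  constructor
  rintro ⟨x, hxB⟩ hx ⟨b, hbB⟩
  rw [mem_subgroupOf] at hx ⊢
  obtain ⟨a, ha, rfl⟩ := hx
  obtain ⟨b₀, hb₀, rfl⟩ := hbB
  have : b₀ * a * b₀⁻¹ ∈ A := conj_mem_of_normal_subgroupOf hAB hN ha hb₀
  refine ⟨b₀ * a * b₀⁻¹, this, by simp [map_mul, map_inv]⟩

lemma card_factor_map_dvd {G H : Type*} [Group G] [Group H] [Finite G] (f : G →* H)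
    {A B : Subgroup G} (hAB : A ≤ B) (hN : (A.subgroupOf B).Normal) :
    Nat.card (↥(Subgroup.map f B) ⧸
        (haveI := normal_map_subgroupOf f hAB hN
         (Subgroup.map f A).subgroupOf (Subgroup.map f B))) ∣
      Nat.card (↥B ⧸ A.subgroupOf B) := by
  haveI := normal_map_subgroupOf f hAB hN
  haveI := hN
  set ψ : ↥B →* ↥(Subgroup.map f B) ⧸ (Subgroup.map f A).subgroupOf (Subgroup.map f B) :=
    (QuotientGroup.mk' _).comp (f.subgroupMap B) with hψ
  have hker : A.subgroupOf B ≤ ψ.ker := by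
    intro a ha
    rw [MonoidHom.mem_ker, hψ, MonoidHom.comp_apply]
    rw [mem_subgroupOf] at ha
    have : (f.subgroupMap B) a ∈ (Subgroup.map f A).subgroupOf (Subgroup.map f B) := by
      rw [mem_subgroupOf]
      exact ⟨(a : G), ha, rfl⟩
    rwa [← QuotientGroup.eq_one_iff] at this
  have hsurj : Function.Surjective ψ :=
    (QuotientGroup.mk'_surjective _).comp (f.subgroupMap_surjective B)
  set χ := QuotientGroup.lift (A.subgroupOf B) ψ hker with hχ
  have hχsurj : Function.Surjective χ := by
    intro y
    obtain ⟨x, hx⟩ := hsurj y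
    exact ⟨QuotientGroup.mk x, by rwa [hχ, QuotientGroup.lift_mk]⟩
  exact Subgroup.card_dvd_of_surjective χ hχsurj

universe u

theorem hall_aux : ∀ (c : ℕ) {G : Type u} [Group G] [Finite G], Nat.card G ≤ c →
    ∀ (π : Set ℕ) (n : ℕ) (s : Fin (n + 1) → Subgroup G),
    s 0 = ⊥ → s (Fin.last n) = ⊤ →
    (∀ i : Fin n, s i.castSucc ≤ s i.succ) →
    (∀ i : Fin n, ((s i.castSucc).subgroupOf (s i.succ)).Normal) →
    (∀ i : Fin n,
      IsPiNumber π (Nat.card ((s i.succ) ⧸ (s i.castSucc).subgroupOf (s i.succ))) ∨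
      IsPiNumber πᶜ (Nat.card ((s i.succ) ⧸ (s i.castSucc).subgroupOf (s i.succ)))) →
    ∃ H : Subgroup G, IsPiNumber π (Nat.card H) ∧
      ∀ p : ℕ, p.Prime → p ∣ H.index → p ∉ π := by
  intro c
  induction c with
  | zero =>
    intro G _ _ hc
    exact absurd hc (by have := Nat.card_pos (α := G); omega)
  | succ c ih =>
    intro G _ _ hc π n s h0 hn hle hnorm hfac
    by_cases h1 : Nat.card G = 1
    · refine ⟨⊤, ?_, ?_⟩
      · rw [Subgroup.card_top, h1]; exact isPiNumber_one
      · intro p hp hd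
        rw [Subgroup.index_top] at hd
        exact absurd (Nat.dvd_one.mp hd) hp.ne_one
    · have hpos := Nat.card_pos (α := G)
      have hnt : 1 < Nat.card G := by omega
      -- find the first nontrivial term of the series
      have hex : ∃ i : Fin n, s i.castSucc = ⊥ ∧ s i.succ ≠ ⊥ := by
        by_contra hno
        push_neg at hno
        have hall : ∀ k : Fin (n + 1), s k = ⊥ :=
          fun k => Fin.induction h0 (fun i ihi => hno i ihi) k
        have hb : (⊤ : Subgroup G) = ⊥ := hn ▸ hall (Fin.last n)
        have := congrArg (fun H : Subgroup G => Nat.card ↥H) hb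
        simp only [Subgroup.card_top, Subgroup.card_bot] at this
        omega
      obtain ⟨i, hib, hisnb⟩ := hex
      -- the first nontrivial term is a π- or π'-group
      have hfac_i := hfac i
      rw [hib, bot_subgroupOf] at hfac_i
      have hcb : Nat.card (↥(s i.succ) ⧸ (⊥ : Subgroup ↥(s i.succ))) = Nat.card ↥(s i.succ) :=
        Nat.card_congr (QuotientGroup.quotientBot (G := ↥(s i.succ))).toEquiv
      rw [hcb] at hfac_i
      -- propagate it to a nontrivial normal π- or π'-subgroup
      have hM : ∃ M : Subgroup G, M ≠ ⊥ ∧ M.Normal ∧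
          (IsPiNumber π (Nat.card M) ∨ IsPiNumber πᶜ (Nat.card M)) := by
        have hsucc : n = (i.succ : Fin (n+1)).val + (n - i.val - 1) := by
          simp only [Fin.val_succ]; omega
        rcases hfac_i with h | h
        · obtain ⟨M, h1', h2', h3'⟩ := exists_normal_aux π n s hn hle hnorm
            (n - i.val - 1) i.succ hsucc (s i.succ) hisnb h le_rfl le_normalizer
          exact ⟨M, h1', h2', Or.inl h3'⟩
        · obtain ⟨M, h1', h2', h3'⟩ := exists_normal_aux πᶜ n s hn hle hnorm
            (n - i.val - 1) i.succ hsucc (s i.succ) hisnb h le_rfl le_normalizer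
          exact ⟨M, h1', h2', Or.inr h3'⟩
      obtain ⟨M, hMbot, hMnorm, hMcase⟩ := hM
      haveI := hMnorm
      -- form the quotient series
      set f := QuotientGroup.mk' M with hfdef
      have hfsurj : Function.Surjective f := QuotientGroup.mk'_surjective M
      set t : Fin (n + 1) → Subgroup (G ⧸ M) := fun k => Subgroup.map f (s k) with ht
      have ht0 : t 0 = ⊥ := by rw [ht]; simp only [h0, Subgroup.map_bot]
      have htn : t (Fin.last n) = ⊤ := by
        rw [ht]; simp only [hn]; exact Subgroup.map_top_of_surjective f hfsurj
      have htle : ∀ j : Fin n, t j.castSucc ≤ t j.succ := fun j => Subgroup.map_mono (hle j)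
      have htnorm : ∀ j : Fin n, ((t j.castSucc).subgroupOf (t j.succ)).Normal :=
        fun j => normal_map_subgroupOf f (hle j) (hnorm j)
      have htfac : ∀ j : Fin n,
          IsPiNumber π (Nat.card ((t j.succ) ⧸ (t j.castSucc).subgroupOf (t j.succ))) ∨
          IsPiNumber πᶜ (Nat.card ((t j.succ) ⧸ (t j.castSucc).subgroupOf (t j.succ))) := by
        intro j
        have hdvd := card_factor_map_dvd f (hle j) (hnorm j)
        rcases hfac j with h | h
        · exact Or.inl (isPiNumber_of_dvd hdvd h)
        · exact Or.inr (isPiNumber_of_dvd hdvd h)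
      -- the quotient is smaller
      have hcards : Nat.card (G ⧸ M) * Nat.card ↥M = Nat.card G :=
        (Subgroup.card_eq_card_quotient_mul_card_subgroup M).symm
      have hM2 : 2 ≤ Nat.card ↥M := (Subgroup.one_lt_card_iff_ne_bot M).mpr hMbot
      have hQpos : 0 < Nat.card (G ⧸ M) := Nat.card_pos
      have hQle : Nat.card (G ⧸ M) ≤ c := by
        have h2Q : Nat.card (G ⧸ M) * 2 ≤ Nat.card (G ⧸ M) * Nat.card ↥M :=
          Nat.mul_le_mul_left _ hM2
        omega
      obtain ⟨Hbar, hHbar1, hHbar2⟩ := ih hQle π n t ht0 htn htle htnorm htfac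
      set H' := Subgroup.comap f Hbar with hH'def
      have hMH' : M ≤ H' := by
        intro x hx
        have hx1 : f x = 1 := (QuotientGroup.eq_one_iff x).mpr hx
        show f x ∈ Hbar
        rw [hx1]; exact Hbar.one_mem
      have hidx : H'.index = Hbar.index := Subgroup.index_comap_of_surjective _ hfsurj
      have hidxpos : 0 < Hbar.index :=
        Nat.pos_of_ne_zero Subgroup.index_ne_zero_of_finite
      have hHbarpos : 0 < Nat.card ↥Hbar := Nat.card_pos
      have hMpos : 0 < Nat.card ↥M := by omega
      have hcardH' : Nat.card ↥H' = Nat.card ↥M * Nat.card ↥Hbar := by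
        have e1 : Nat.card ↥H' * H'.index = Nat.card G := Subgroup.card_mul_index H'
        have e2 : Nat.card ↥Hbar * Hbar.index = Nat.card (G ⧸ M) := Subgroup.card_mul_index Hbar
        apply Nat.eq_of_mul_eq_mul_right hidxpos
        rw [← hidx, e1, ← hcards, ← e2, hidx]
        ring
      rcases hMcase with hMπ | hMπ'
      · -- M is a π-group: the preimage of Hbar works
        refine ⟨H', ?_, ?_⟩
        · rw [hcardH']; exact isPiNumber_mul hMπ hHbar1
        · intro p hp hd
          rw [hidx] at hd
          exact hHbar2 p hp hd
      · -- M is a π'-group: apply Schur–Zassenhaus inside H'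
        set N := M.subgroupOf H' with hNdef
        haveI : N.Normal := Subgroup.normal_subgroupOf
        have hNcard : Nat.card ↥N = Nat.card ↥M :=
          Nat.card_congr (subgroupOfEquivOfLe hMH').toEquiv
        have hNidx : N.index = Nat.card ↥Hbar := by
          have e3 : Nat.card ↥N * N.index = Nat.card ↥H' := Subgroup.card_mul_index N
          apply Nat.eq_of_mul_eq_mul_right hMpos
          rw [← hNcard]
          calc N.index * Nat.card ↥N = Nat.card ↥N * N.index := by ring
            _ = Nat.card ↥H' := e3
            _ = Nat.card ↥M * Nat.card ↥Hbar := hcardH'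
            _ = Nat.card ↥Hbar * Nat.card ↥N := by rw [hNcard]; ring
        have hcop : Nat.Coprime (Nat.card ↥N) N.index := by
          rw [hNcard, hNidx]
          by_contra hnc
          obtain ⟨p, hp, hpd⟩ := Nat.exists_prime_and_dvd hnc
          have hp1 : p ∣ Nat.card ↥M := hpd.trans (Nat.gcd_dvd_left _ _)
          have hp2 : p ∣ Nat.card ↥Hbar := hpd.trans (Nat.gcd_dvd_right _ _)
          exact (hMπ' p hp hp1) (hHbar1 p hp hp2)
        obtain ⟨C, hC⟩ := Subgroup.exists_right_complement'_of_coprime hcop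
        have hCcard : Nat.card ↥C = Nat.card ↥Hbar := by
          have := hC.card_mul
          rw [hNcard, hcardH'] at this
          exact Nat.eq_of_mul_eq_mul_left hMpos this
        set Hfin := Subgroup.map H'.subtype C with hHfin
        have hHfincard : Nat.card ↥Hfin = Nat.card ↥Hbar := by
          rw [← hCcard]
          exact (Nat.card_congr (Subgroup.equivMapOfInjective C H'.subtype
            (Subgroup.subtype_injective H')).toEquiv).symm
        have hHfinidx : Hfin.index = Hbar.index * Nat.card ↥M := by
          have e4 : Nat.card ↥Hfin * Hfin.index = Nat.card G := Subgroup.card_mul_index Hfin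
          apply Nat.eq_of_mul_eq_mul_left hHbarpos
          rw [← hHfincard, e4, ← hcards]
          have e2 : Nat.card ↥Hbar * Hbar.index = Nat.card (G ⧸ M) := Subgroup.card_mul_index Hbar
          rw [← e2, hHfincard]
          ring
        refine ⟨Hfin, ?_, ?_⟩
        · rw [hHfincard]; exact hHbar1
        · intro p hp hd
          rw [hHfinidx] at hd
          rcases hp.dvd_mul.mp hd with h | h
          · exact hHbar2 p hp h
          · exact hMπ' p hp h


/-- If a finite group `G` has a subnormal series in which every factor is either a
`π`-group or a `π'`-group, then `G` has a `π`-Hall subgroup. -/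
theorem epi_of_subnormal_series {G : Type*} [Group G] [Finite G] (π : Set ℕ) (n : ℕ)
    (s : Fin (n + 1) → Subgroup G)
    (h0 : s 0 = ⊥) (hn : s (Fin.last n) = ⊤)
    (hle : ∀ i : Fin n, s i.castSucc ≤ s i.succ)
    (hnorm : ∀ i : Fin n, ((s i.castSucc).subgroupOf (s i.succ)).Normal)
    (hfac : ∀ i : Fin n,
      IsPiNumber π (Nat.card ((s i.succ) ⧸ (s i.castSucc).subgroupOf (s i.succ))) ∨
      IsPiNumber πᶜ (Nat.card ((s i.succ) ⧸ (s i.castSucc).subgroupOf (s i.succ)))) :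
    ∃ H : Subgroup G, IsPiHall π H := by
  obtain ⟨H, h1, h2⟩ := hall_aux (Nat.card G) le_rfl π n s h0 hn hle hnorm hfac
  exact ⟨H, h1, h2⟩
end

section
/- Let M and N be normal subgroups of a finite group G with M ∩ N = 1, let A, B be subgroups of M with B normal in A, and let the bar denote the natural homomorphism G → G/N. If x ∈ G and the image of x normalizes both A̅ and B̅ in G/N, then x normalizes A and B. Consequently the image of N_G(A/B) in G/N equals N_{G/N}(A̅/B̅). -/
private lemma mem_normalizer_of_conj' {G : Type*} [Group G] (A : Subgroup G) (x : G)
    (h1 : ∀ a ∈ A, x * a * x⁻¹ ∈ A) (h2 : ∀ a ∈ A, x⁻¹ * a * x ∈ A) :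
    x ∈ Subgroup.normalizer (A : Set G) := by
  rw [Subgroup.mem_normalizer_iff]
  intro h
  constructor
  · exact fun hh => h1 h hh
  · intro hh
    have := h2 _ hh
    simpa [mul_assoc] using this

/-- Let `M, N ⊴ G` with `M ∩ N = 1` and `B ⊴ A ≤ M`. If the image of `x` in `G/N`
normalizes the images of `A` and `B`, then `x` normalizes `A` and `B`; consequently
the image of `N_G(A/B) = N_G(A) ∩ N_G(B)` in `G/N` equals `N_{G/N}(A̅/B̅)`. -/
theorem normalizer_section_quotient {G : Type*} [Group G] [Finite G]
    (M N : Subgroup G) [M.Normal] [N.Normal] (hMN : M ⊓ N = ⊥)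
    (A B : Subgroup G) (hAM : A ≤ M) (hBA : B ≤ A)
    (hBnormA : ∀ a ∈ A, ∀ b ∈ B, a * b * a⁻¹ ∈ B) :
    (∀ x : G,
        QuotientGroup.mk' N x ∈ Subgroup.normalizer ((A.map (QuotientGroup.mk' N) : Subgroup (G ⧸ N)) : Set (G ⧸ N)) →
        QuotientGroup.mk' N x ∈ Subgroup.normalizer ((B.map (QuotientGroup.mk' N) : Subgroup (G ⧸ N)) : Set (G ⧸ N)) →
        x ∈ Subgroup.normalizer (A : Set G) ∧ x ∈ Subgroup.normalizer (B : Set G)) ∧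
      (Subgroup.normalizer (A : Set G) ⊓ Subgroup.normalizer (B : Set G)).map (QuotientGroup.mk' N) =
        Subgroup.normalizer ((A.map (QuotientGroup.mk' N) : Subgroup (G ⧸ N)) : Set (G ⧸ N)) ⊓
          Subgroup.normalizer ((B.map (QuotientGroup.mk' N) : Subgroup (G ⧸ N)) : Set (G ⧸ N)) := by
  -- key: conjugating an element of C ≤ M stays in C
  have key : ∀ (C : Subgroup G), C ≤ M → ∀ x : G,
      QuotientGroup.mk' N x ∈ Subgroup.normalizer ((C.map (QuotientGroup.mk' N) : Subgroup (G ⧸ N)) : Set (G ⧸ N)) →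
      ∀ a ∈ C, x * a * x⁻¹ ∈ C := by
    intro C hCM x hx a ha
    have hmem : QuotientGroup.mk' N (x * a * x⁻¹) ∈ C.map (QuotientGroup.mk' N) := by
      rw [map_mul, map_mul, map_inv]
      exact (Subgroup.mem_normalizer_iff.mp hx _).mp ⟨a, ha, rfl⟩
    obtain ⟨a', ha', heq⟩ := hmem
    -- heq : mk' N a' = mk' N (x * a * x⁻¹)
    have hn : a'⁻¹ * (x * a * x⁻¹) ∈ N := by
      have := QuotientGroup.eq.mp heq
      simpa using this
    have hconjM : x * a * x⁻¹ ∈ M := Subgroup.Normal.conj_mem ‹M.Normal› a (hCM ha) x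
    have hm : a'⁻¹ * (x * a * x⁻¹) ∈ M := M.mul_mem (M.inv_mem (hCM ha')) hconjM
    have : a'⁻¹ * (x * a * x⁻¹) ∈ M ⊓ N := ⟨hm, hn⟩
    rw [hMN, Subgroup.mem_bot] at this
    have : x * a * x⁻¹ = a' := by
      have := mul_eq_one_iff_inv_eq.mp this
      simpa [eq_comm] using this.symm
    rw [this]; exact ha'
  have norm : ∀ (C : Subgroup G), C ≤ M → ∀ x : G,
      QuotientGroup.mk' N x ∈ Subgroup.normalizer ((C.map (QuotientGroup.mk' N) : Subgroup (G ⧸ N)) : Set (G ⧸ N)) →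
      x ∈ Subgroup.normalizer (C : Set G) := by
    intro C hCM x hx
    refine mem_normalizer_of_conj' C x (key C hCM x hx) ?_
    have hx' : QuotientGroup.mk' N x⁻¹ ∈ Subgroup.normalizer ((C.map (QuotientGroup.mk' N) : Subgroup (G ⧸ N)) : Set (G ⧸ N)) := by
      rw [map_inv]; exact Subgroup.inv_mem _ hx
    simpa using key C hCM x⁻¹ hx'
  have part1 : ∀ x : G,
      QuotientGroup.mk' N x ∈ Subgroup.normalizer ((A.map (QuotientGroup.mk' N) : Subgroup (G ⧸ N)) : Set (G ⧸ N)) →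
      QuotientGroup.mk' N x ∈ Subgroup.normalizer ((B.map (QuotientGroup.mk' N) : Subgroup (G ⧸ N)) : Set (G ⧸ N)) →
      x ∈ Subgroup.normalizer (A : Set G) ∧ x ∈ Subgroup.normalizer (B : Set G) :=
    fun x hxA hxB => ⟨norm A hAM x hxA, norm B (hBA.trans hAM) x hxB⟩
  refine ⟨part1, ?_⟩
  -- forward inclusion: image of normalizer ≤ normalizer of image
  have fwd : ∀ (C : Subgroup G) (x : G), x ∈ Subgroup.normalizer (C : Set G) →
      QuotientGroup.mk' N x ∈ Subgroup.normalizer ((C.map (QuotientGroup.mk' N) : Subgroup (G ⧸ N)) : Set (G ⧸ N)) := by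
    intro C x hx
    refine mem_normalizer_of_conj' _ _ ?_ ?_
    · rintro _ ⟨c, hc, rfl⟩
      refine ⟨x * c * x⁻¹, (Subgroup.mem_normalizer_iff.mp hx c).mp hc, by simp⟩
    · rintro _ ⟨c, hc, rfl⟩
      refine ⟨x⁻¹ * c * x, ?_, by simp⟩
      have := (Subgroup.mem_normalizer_iff.mp (Subgroup.inv_mem _ hx) c).mp hc
      simpa using this
  apply le_antisymm
  · rintro _ ⟨x, hx, rfl⟩
    exact ⟨fwd A x hx.1, fwd B x hx.2⟩
  · rintro q ⟨hqA, hqB⟩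
    obtain ⟨x, rfl⟩ := QuotientGroup.mk'_surjective N q
    exact ⟨x, part1 x hqA hqB, rfl⟩
end

section
/- Let M and N be normal subgroups of a finite group G with M ∩ N = 1, and let A, B be subgroups of M with B ⊴ A. Then the group of induced automorphisms Aut_G(A/B) is isomorphic to Aut_{G/N}((AN/N)/(BN/N)). -/
variable {G : Type*} [Group G]

/-- `N_G(A/B) = N_G(A) ∩ N_G(B)`, the normalizer of the section `A/B` in `G`. -/
def sectionNormalizer (A B : Subgroup G) : Subgroup G := Subgroup.normalizer (A : Set G) ⊓ Subgroup.normalizer (B : Set G)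

/-- `C_G(A/B)`: elements normalizing `A` and `B` and inducing the trivial
automorphism on `A/B` (by `Ba ↦ B x⁻¹ a x`). -/
def sectionCentralizer (A B : Subgroup G) : Subgroup G where
  carrier := {x | x ∈ Subgroup.normalizer (A : Set G) ∧ x ∈ Subgroup.normalizer (B : Set G) ∧ ∀ a ∈ A, x⁻¹ * a * x * a⁻¹ ∈ B}
  one_mem' := ⟨Subgroup.one_mem _, Subgroup.one_mem _, fun a _ => by simpa using B.one_mem⟩
  mul_mem' := by
    rintro x y ⟨hxA, hxB, hx⟩ ⟨hyA, hyB, hy⟩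
    refine ⟨mul_mem hxA hyA, mul_mem hxB hyB, fun a ha => ?_⟩
    have ha1 : x⁻¹ * a * x ∈ A := by
      have := (Subgroup.mem_normalizer_iff.mp (inv_mem hxA) a).mp ha
      simpa [mul_assoc] using this
    have h1 : y⁻¹ * (x⁻¹ * a * x) * y * (x⁻¹ * a * x)⁻¹ ∈ B := hy _ ha1
    have h2 : (x⁻¹ * a * x) * a⁻¹ ∈ B := hx a ha
    have key : (x * y)⁻¹ * a * (x * y) * a⁻¹ =
        (y⁻¹ * (x⁻¹ * a * x) * y * (x⁻¹ * a * x)⁻¹) * ((x⁻¹ * a * x) * a⁻¹) := by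
      group
    rw [key]; exact mul_mem h1 h2
  inv_mem' := by
    rintro x ⟨hxA, hxB, hx⟩
    refine ⟨inv_mem hxA, inv_mem hxB, fun a ha => ?_⟩
    have ha' : x * a * x⁻¹ ∈ A := (Subgroup.mem_normalizer_iff.mp hxA a).mp ha
    have h1 : x⁻¹ * (x * a * x⁻¹) * x * (x * a * x⁻¹)⁻¹ ∈ B := hx _ ha'
    have key : ((x⁻¹)⁻¹ * a * x⁻¹ * a⁻¹) =
        (x⁻¹ * (x * a * x⁻¹) * x * (x * a * x⁻¹)⁻¹)⁻¹ := by group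
    rw [key]; exact inv_mem h1
  
instance sectionCentralizer_normal (A B : Subgroup G) :
    ((sectionCentralizer A B).subgroupOf (sectionNormalizer A B)).Normal := by
  constructor
  intro c hc g
  rw [Subgroup.mem_subgroupOf] at hc ⊢
  obtain ⟨hcA, hcB, hcact⟩ := hc
  obtain ⟨hgA, hgB⟩ := g.2
  refine ⟨?_, ?_, ?_⟩
  · exact mul_mem (mul_mem hgA hcA) (inv_mem hgA)
  · exact mul_mem (mul_mem hgB hcB) (inv_mem hgB)
  · intro a ha
    have ha1 : (g : G)⁻¹ * a * g ∈ A := by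
      have := (Subgroup.mem_normalizer_iff.mp (inv_mem hgA) a).mp ha
      simpa [mul_assoc] using this
    have hb : c⁻¹ * ((g : G)⁻¹ * a * g) * c * ((g : G)⁻¹ * a * g)⁻¹ ∈ B := hcact _ ha1
    have hgb : (g : G) * (c⁻¹ * ((g : G)⁻¹ * a * g) * c * ((g : G)⁻¹ * a * g)⁻¹) * (g : G)⁻¹ ∈ B :=
      (Subgroup.mem_normalizer_iff.mp hgB _).mp hb
    have key : (↑(g * c * g⁻¹) : G)⁻¹ * a * (↑(g * c * g⁻¹) : G) * a⁻¹ =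
        (g : G) * (c⁻¹ * ((g : G)⁻¹ * a * g) * c * ((g : G)⁻¹ * a * g)⁻¹) * (g : G)⁻¹ := by
      push_cast
      group
    rw [key]; exact hgb

/-- `Aut_G(A/B) ≅ Aut_{G/N}(A̅/B̅)` when `M, N ⊴ G`, `M ∩ N = 1`, `B ⊴ A ≤ M`,
where the group of induced automorphisms is `N_G(A/B)/C_G(A/B)`. -/
theorem inducedAutomorphisms_iso_quotient {G : Type*} [Group G] [Finite G]
    (M N : Subgroup G) [M.Normal] [N.Normal] (hMN : M ⊓ N = ⊥)
    (A B : Subgroup G) (hAM : A ≤ M) (hBA : B ≤ A)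
    (hBnormA : ∀ a ∈ A, ∀ b ∈ B, a * b * a⁻¹ ∈ B) :
    Nonempty
      ((sectionNormalizer A B ⧸
          (sectionCentralizer A B).subgroupOf (sectionNormalizer A B)) ≃*
        (sectionNormalizer (A.map (QuotientGroup.mk' N)) (B.map (QuotientGroup.mk' N)) ⧸
          (sectionCentralizer (A.map (QuotientGroup.mk' N)) (B.map (QuotientGroup.mk' N))).subgroupOf
            (sectionNormalizer (A.map (QuotientGroup.mk' N)) (B.map (QuotientGroup.mk' N))))) := by
  set φ := QuotientGroup.mk' N with hφ
  have hφsurj : Function.Surjective φ := QuotientGroup.mk'_surjective N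
  have hBM : B ≤ M := hBA.trans hAM
  -- injectivity of φ on M, relative to subgroups of M
  have hinj : ∀ (K : Subgroup G), K ≤ M → ∀ x ∈ M, φ x ∈ K.map φ → x ∈ K := by
    rintro K hK x hx ⟨k, hk, he⟩
    have h1 : x * k⁻¹ ∈ N := by
      rw [← QuotientGroup.ker_mk' N, MonoidHom.mem_ker]
      simp only [map_mul, map_inv, ← hφ, he, mul_inv_cancel]
    have h2 : x * k⁻¹ ∈ M := mul_mem hx (inv_mem (hK hk))
    have h3 : x * k⁻¹ = 1 := by
      rw [← Subgroup.mem_bot, ← hMN]; exact ⟨h2, h1⟩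
    have : x = k := by
      have := mul_inv_eq_one.mp h3; exact this
    exact this ▸ hk
  -- normalizer correspondence
  have hnorm_iff : ∀ (K : Subgroup G), K ≤ M → ∀ g : G,
      g ∈ Subgroup.normalizer (K : Set G) ↔ φ g ∈ Subgroup.normalizer ((K.map φ : Subgroup (G ⧸ N)) : Set (G ⧸ N)) := by
    intro K hK g
    constructor
    · intro hg
      rw [Subgroup.mem_normalizer_iff]
      intro h
      constructor
      · rintro ⟨a, ha, rfl⟩
        exact ⟨g * a * g⁻¹, (Subgroup.mem_normalizer_iff.mp hg a).mp ha, by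
          simp [map_mul, map_inv]⟩
      · rintro ⟨a, ha, he⟩
        have hga : g⁻¹ * a * g ∈ K := by
          refine (Subgroup.mem_normalizer_iff.mp hg (g⁻¹ * a * g)).mpr ?_
          have : g * (g⁻¹ * a * g) * g⁻¹ = a := by group
          rw [this]; exact ha
        refine ⟨g⁻¹ * a * g, hga, ?_⟩
        have : φ a = φ g * h * (φ g)⁻¹ := he
        simp only [map_mul, map_inv, this]
        group
    · intro hg
      rw [Subgroup.mem_normalizer_iff]
      intro a
      constructor
      · intro ha
        have hM : g * a * g⁻¹ ∈ M := Subgroup.Normal.conj_mem ‹M.Normal› a (hK ha) g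
        refine hinj K hK _ hM ?_
        have : φ (g * a * g⁻¹) = φ g * φ a * (φ g)⁻¹ := by simp [map_mul, map_inv]
        rw [this]
        exact (Subgroup.mem_normalizer_iff.mp hg (φ a)).mp ⟨a, ha, rfl⟩
      · intro ha
        have haM : a ∈ M := by
          have : a = g⁻¹ * (g * a * g⁻¹) * (g⁻¹)⁻¹ := by group
          rw [this]
          exact Subgroup.Normal.conj_mem ‹M.Normal› _ (hK ha) g⁻¹
        refine hinj K hK a haM ?_
        refine (Subgroup.mem_normalizer_iff.mp hg (φ a)).mpr ?_
        have : φ g * φ a * (φ g)⁻¹ = φ (g * a * g⁻¹) := by simp [map_mul, map_inv]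
        rw [this]
        exact ⟨g * a * g⁻¹, ha, rfl⟩
  -- sectionNormalizer correspondence
  have hN : sectionNormalizer A B =
      Subgroup.comap φ (sectionNormalizer (A.map φ) (B.map φ)) := by
    ext g
    simp only [sectionNormalizer, Subgroup.mem_inf, Subgroup.mem_comap]
    exact and_congr (hnorm_iff A hAM g) (hnorm_iff B hBM g)
  -- sectionCentralizer correspondence
  have hC : sectionCentralizer A B =
      Subgroup.comap φ (sectionCentralizer (A.map φ) (B.map φ)) := by
    ext g
    rw [Subgroup.mem_comap]
    constructor
    · rintro ⟨hgA, hgB, hact⟩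
      refine ⟨(hnorm_iff A hAM g).mp hgA, (hnorm_iff B hBM g).mp hgB, ?_⟩
      rintro abar ⟨a, ha, rfl⟩
      exact ⟨g⁻¹ * a * g * a⁻¹, hact a ha, by simp [map_mul, map_inv]⟩
    · rintro ⟨hgA, hgB, hact⟩
      have hgA' : g ∈ Subgroup.normalizer (A : Set G) := (hnorm_iff A hAM g).mpr hgA
      have hgB' : g ∈ Subgroup.normalizer (B : Set G) := (hnorm_iff B hBM g).mpr hgB
      refine ⟨hgA', hgB', fun a ha => ?_⟩
      have hy : g⁻¹ * a * g ∈ A := by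
        refine (Subgroup.mem_normalizer_iff.mp hgA' (g⁻¹ * a * g)).mpr ?_
        have : g * (g⁻¹ * a * g) * g⁻¹ = a := by group
        rw [this]; exact ha
      have hxM : g⁻¹ * a * g * a⁻¹ ∈ M := mul_mem (hAM hy) (inv_mem (hAM ha))
      refine hinj B hBM _ hxM ?_
      have := hact (φ a) ⟨a, ha, rfl⟩
      have heq : (φ a)⁻¹⁻¹ = φ a := by simp
      have : φ (g⁻¹ * a * g * a⁻¹) = (φ g)⁻¹ * φ a * φ g * (φ a)⁻¹ := by
        simp [map_mul, map_inv]
      rw [this]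
      exact hact (φ a) ⟨a, ha, rfl⟩
  -- build the isomorphism via the first isomorphism theorem
  set H := sectionNormalizer A B with hH
  set Hb := sectionNormalizer (A.map φ) (B.map φ) with hHb
  set Cb := sectionCentralizer (A.map φ) (B.map φ) with hCb
  have hmemH : ∀ h : H, φ (h : G) ∈ Hb := by
    intro h
    exact Subgroup.mem_comap.mp (hN.le h.2)
  let ψ : H →* Hb := (φ.comp H.subtype).codRestrict Hb (fun h => hmemH h)
  let f : H →* Hb ⧸ Cb.subgroupOf Hb := (QuotientGroup.mk' (Cb.subgroupOf Hb)).comp ψ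
  have hker : f.ker = (sectionCentralizer A B).subgroupOf H := by
    ext h
    rw [MonoidHom.mem_ker, Subgroup.mem_subgroupOf]
    simp only [f, MonoidHom.comp_apply, QuotientGroup.mk'_apply]
    rw [QuotientGroup.eq_one_iff, Subgroup.mem_subgroupOf]
    have : ((ψ h : Hb) : G ⧸ N) = φ (h : G) := rfl
    rw [this, hC, Subgroup.mem_comap]
  have hsurj : Function.Surjective f := by
    intro q
    obtain ⟨hb, rfl⟩ := QuotientGroup.mk'_surjective _ q
    obtain ⟨g, hg⟩ := hφsurj (hb : G ⧸ N)
    have hgH : g ∈ H := by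
      rw [hN, Subgroup.mem_comap, hg]
      exact hb.2
    refine ⟨⟨g, hgH⟩, ?_⟩
    simp only [f, MonoidHom.comp_apply, QuotientGroup.mk'_apply]
    congr 1
    exact Subtype.ext hg
  exact ⟨(QuotientGroup.quotientMulEquivOfEq hker.symm).trans
    (QuotientGroup.quotientKerEquivOfSurjective f hsurj)⟩
end

section
/- Let A be a normal subgroup of a finite group G such that A contains a π-Hall subgroup, G/A is a π-group, and let M be a π-Hall subgroup of A. Then there exists a π-Hall subgroup H of G with H ∩ A = M if and only if the A-conjugacy class {Mᵃ : a ∈ A} is invariant under conjugation by every element of G. -/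
open Pointwise

private lemma conj_smul_eq_self_iff {G : Type*} [Group G] (M : Subgroup G) (g : G) :
    MulAut.conj g • M = M ↔ g ∈ Subgroup.normalizer (M : Set G) := by
  have key : ∀ x : G, x ∈ MulAut.conj g • M ↔ g⁻¹ * x * g ∈ M := by
    intro x
    rw [Subgroup.mem_pointwise_smul_iff_inv_smul_mem, ← map_inv (MulAut.conj),
      MulAut.smul_def, MulAut.conj_apply, inv_inv]
  rw [Subgroup.mem_normalizer_iff]
  constructor
  · intro h x
    have hy := key (g * x * g⁻¹)
    rw [h] at hy
    have e : g⁻¹ * (g * x * g⁻¹) * g = x := by group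
    rw [e] at hy
    exact hy.symm
  · intro h
    ext x
    have := h (g⁻¹ * x * g)
    have e : g * (g⁻¹ * x * g) * g⁻¹ = x := by group
    rw [e] at this
    rw [key x]
    exact this

private lemma pi_coprime {π : Set ℕ} {m n : ℕ} (hm : IsPiNumber π m)
    (hn : ∀ p : ℕ, p.Prime → p ∣ n → p ∉ π) : Nat.Coprime m n := by
  by_contra h
  obtain ⟨p, hp, hpd⟩ := Nat.exists_prime_and_dvd h
  exact hn p hp (hpd.trans (Nat.gcd_dvd_right m n)) (hm p hp (hpd.trans (Nat.gcd_dvd_left m n)))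

private lemma card_map_eq {G G' : Type*} [Group G] [Group G'] (f : G →* G') (K : Subgroup G) :
    Nat.card (K.map f) = (f.ker.subgroupOf K).index := by
  have h1 : K.map f = (f.comp K.subtype).range := by
    rw [MonoidHom.range_comp, Subgroup.range_subtype]
  have h2 : (f.ker.subgroupOf K) = (f.comp K.subtype).ker := MonoidHom.comap_ker f K.subtype
  rw [h1, h2, Subgroup.index_eq_card]
  exact (Nat.card_congr (QuotientGroup.quotientKerEquivRange (f.comp K.subtype)).toEquiv).symm

/-- Let `A ⊴ G` with `G/A` a `π`-group, and `M` a `π`-Hall subgroup of `A`. There is a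
`π`-Hall subgroup `H` of `G` with `H ∩ A = M` iff the `A`-class `{Mᵃ : a ∈ A}` is
`G`-invariant. -/
theorem hall_extension_iff_invariant_class {G : Type*} [Group G] [Finite G] (π : Set ℕ)
    (A : Subgroup G) [A.Normal]
    (hA : ∃ K : Subgroup G, K ≤ A ∧ IsPiHall π (K.subgroupOf A))
    (hGA : IsPiNumber π (Nat.card (G ⧸ A)))
    (M : Subgroup G) (hMA : M ≤ A) (hM : IsPiHall π (M.subgroupOf A)) :
    (∃ H : Subgroup G, IsPiHall π H ∧ H ⊓ A = M) ↔
      ∀ g : G, ∃ a ∈ A, MulAut.conj g • M = MulAut.conj a • M := by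
  have hcardM : Nat.card (M.subgroupOf A) = Nat.card M :=
    Nat.card_congr (Subgroup.subgroupOfEquivOfLe hMA).toEquiv
  constructor
  · rintro ⟨H, hH, hHA⟩ g
    -- `H ⊔ A = ⊤`
    have hidx : (H ⊔ A).index = 1 := by
      by_contra hne
      obtain ⟨p, hp, hpd⟩ := Nat.exists_prime_and_dvd hne
      exact hH.2 p hp (hpd.trans (Subgroup.index_dvd_of_le le_sup_left))
        (hGA p hp (hpd.trans (Subgroup.index_dvd_of_le le_sup_right)))
    have htop : A ⊔ H = ⊤ := by rw [sup_comm]; exact Subgroup.index_eq_one.mp hidx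
    have hg : g ∈ ((A : Set G) * H) := by
      rw [← Subgroup.normal_mul, htop]; trivial
    obtain ⟨a, ha, h, hh, rfl⟩ := hg
    refine ⟨a, ha, ?_⟩
    have hsm : MulAut.conj h • M = M := by
      rw [← hHA, Subgroup.smul_inf,
        (conj_smul_eq_self_iff H h).mpr (Subgroup.le_normalizer hh),
        Subgroup.Normal.conj_smul_eq_self]
    rw [map_mul, mul_smul, hsm]
  · intro hinv
    set N := Subgroup.normalizer (M : Set G) with hNdef
    have hMN : M ≤ N := Subgroup.le_normalizer
    have hsup : A ⊔ N = ⊤ := by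
      rw [eq_top_iff]
      rintro g -
      obtain ⟨a, ha, hconj⟩ := hinv g
      have hn : a⁻¹ * g ∈ N := by
        rw [hNdef, ← conj_smul_eq_self_iff, map_mul, mul_smul, hconj, ← mul_smul,
          ← map_mul, inv_mul_cancel, map_one, one_smul]
      have : g = a * (a⁻¹ * g) := by group
      rw [this]
      exact Subgroup.mul_mem _ (Subgroup.mem_sup_left ha) (Subgroup.mem_sup_right hn)
    set M' : Subgroup N := M.subgroupOf N with hM'def
    have hM'N : M'.Normal := Subgroup.normal_in_normalizer
    set φ : N →* N ⧸ M' := QuotientGroup.mk' M' with hφdef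
    have hφsurj : Function.Surjective φ := QuotientGroup.mk'_surjective M'
    have hker : φ.ker = M' := QuotientGroup.ker_mk' M'
    set P : Subgroup (N ⧸ M') := (A.subgroupOf N).map φ with hPdef
    have hAN : (A.subgroupOf N).Normal := Subgroup.normal_subgroupOf
    have hPnormal : P.Normal := hAN.map φ hφsurj
    have hM'A : M' ≤ A.subgroupOf N := fun x hx => hMA hx
    -- card of P
    have hcardP : Nat.card P = M.relIndex (A ⊓ N) := by
      rw [hPdef, card_map_eq, hker]
      show M'.relIndex (A.subgroupOf N) = _
      rw [hM'def, ← Subgroup.inf_subgroupOf_right A N,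
        Subgroup.relIndex_subgroupOf inf_le_right]
    have hPpi' : ∀ p : ℕ, p.Prime → p ∣ Nat.card P → p ∉ π := by
      intro p hp hpd
      have hdvd : M.relIndex (A ⊓ N) ∣ M.relIndex A :=
        ⟨(A ⊓ N).relIndex A,
          (Subgroup.relIndex_mul_relIndex M (A ⊓ N) A (le_inf hMA hMN) inf_le_left).symm⟩
      exact hM.2 p hp ((hcardP ▸ hpd).trans hdvd)
    -- index of P
    have hPidx : P.index = A.index := by
      rw [hPdef, Subgroup.index_map, hker, sup_of_le_left hM'A,
        MonoidHom.range_eq_top_of_surjective φ hφsurj, Subgroup.index_top, mul_one]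
      show A.relIndex N = A.index
      rw [← Subgroup.relIndex_sup_left, hsup, Subgroup.relIndex_top_right]
    have hPidxpi : IsPiNumber π P.index := by rw [hPidx]; exact hGA
    have hco : Nat.Coprime (Nat.card P) P.index :=
      (pi_coprime hPidxpi hPpi').symm
    obtain ⟨K, hK⟩ := Subgroup.exists_right_complement'_of_coprime hco
    set H₀ : Subgroup N := K.comap φ with hH₀def
    set H : Subgroup G := H₀.map N.subtype with hHdef
    have hM'H₀ : M' ≤ H₀ := by
      intro x hx
      have h1 : φ x = 1 := MonoidHom.mem_ker.mp (hker.ge hx)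
      show φ x ∈ K
      rw [h1]
      exact K.one_mem
    -- H ⊓ A = M
    have hHA : H ⊓ A = M := by
      apply le_antisymm
      · rintro x ⟨hxH, hxA⟩
        obtain ⟨y, hy, rfl⟩ := hxH
        have h1 : φ y ∈ K := hy
        have h2 : φ y ∈ P := Subgroup.mem_map_of_mem φ (Subgroup.mem_subgroupOf.mpr hxA)
        have h3 : φ y ∈ (⊥ : Subgroup (N ⧸ M')) := hK.disjoint.le_bot ⟨h2, h1⟩
        have h4 : y ∈ M' := by
          rw [← hker, MonoidHom.mem_ker]
          exact Subgroup.mem_bot.mp h3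
        exact h4
      · intro x hx
        refine ⟨Subgroup.mem_map_of_mem _ (show (⟨x, hMN hx⟩ : N) ∈ H₀ from ?_), hMA hx⟩
        have : (⟨x, hMN hx⟩ : N) ∈ M' := hx
        rw [hH₀def, Subgroup.mem_comap, ← hker] at *
        rw [MonoidHom.mem_ker.mp this]
        exact K.one_mem
    -- cardinalities
    have hcardH : Nat.card H = Nat.card H₀ :=
      (Nat.card_congr (Subgroup.equivMapOfInjective H₀ _ N.subtype_injective).toEquiv).symm
    have hmapH₀ : H₀.map φ = K := Subgroup.map_comap_eq_self_of_surjective hφsurj K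
    have hcardM' : Nat.card M' = Nat.card M :=
      Nat.card_congr (Subgroup.subgroupOfEquivOfLe hMN).toEquiv
    have hcardK : Nat.card K = P.index := (hK.symm.index_eq_card).symm
    have hcardH₀ : Nat.card H₀ = Nat.card K * Nat.card M := by
      have h1 := Subgroup.card_eq_card_quotient_mul_card_subgroup (M'.subgroupOf H₀)
      have h2 : Nat.card (H₀ ⧸ M'.subgroupOf H₀) = Nat.card K := by
        rw [← hmapH₀, card_map_eq, hker, Subgroup.index_eq_card]
      have h3 : Nat.card (M'.subgroupOf H₀) = Nat.card M :=
        (Nat.card_congr (Subgroup.subgroupOfEquivOfLe hM'H₀).toEquiv).trans hcardM'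
      rw [h1, h2, h3]
    have hcard : Nat.card H = A.index * Nat.card M := by
      rw [hcardH, hcardH₀, hcardK, hPidx]
    -- index of H
    have hidxH : H.index = M.relIndex A := by
      have h1 : Nat.card H * H.index = Nat.card G := Subgroup.card_mul_index H
      have h2 : Nat.card M * M.relIndex A = Nat.card A := by
        have := Subgroup.card_mul_index (M.subgroupOf A)
        rwa [hcardM] at this
      have h3 : Nat.card A * A.index = Nat.card G := Subgroup.card_mul_index A
      have h4 : Nat.card H * M.relIndex A = Nat.card G := by
        rw [hcard, mul_assoc, h2, mul_comm]
        exact h3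
      have hpos : 0 < Nat.card H := Nat.card_pos
      exact Nat.eq_of_mul_eq_mul_left hpos (h1.trans h4.symm)
    refine ⟨H, ⟨?_, ?_⟩, hHA⟩
    · intro p hp hpd
      rw [hcard] at hpd
      rcases (Nat.Prime.dvd_mul hp).mp hpd with h | h
      · exact hGA p hp h
      · exact hM.1 p hp (hcardM ▸ h)
    · intro p hp hpd
      rw [hidxH] at hpd
      exact hM.2 p hp hpd
end

section
/- Let S be a normal subgroup of a finite group G such that G/S is solvable (e.g., G ≤ Aut(S) with S simple, by the Schreier conjecture), and suppose every proper subgroup M with S ≤ M < G contains a π-Hall subgroup whose index computation makes it a π-Hall subgroup of G whenever |G:M| is a π'-number. If G has no π-Hall subgroup and S ≤ G is such a minimal counterexample configuration, then G/S is a π-group. Formally: if G/S ∈ D_π, and for every M with S ≤ M < G, M ∈ E_π, and G ∉ E_π, then G/S is a π-group. -/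
open Pointwise

/-- `K` satisfies `E_π`: it has a `π`-Hall subgroup. -/
def SatisfiesEpi (π : Set ℕ) (K : Type*) [Group K] : Prop :=
  ∃ H : Subgroup K, IsPiHall π H

/-- `K` satisfies `D_π`: it has a `π`-Hall subgroup, all `π`-Hall subgroups are
conjugate, and every `π`-subgroup lies in a `π`-Hall subgroup. -/
def SatisfiesDpi (π : Set ℕ) (K : Type*) [Group K] : Prop :=
  (∃ H : Subgroup K, IsPiHall π H) ∧
  (∀ H₁ H₂ : Subgroup K, IsPiHall π H₁ → IsPiHall π H₂ →
    ∃ g : K, MulAut.conj g • H₁ = H₂) ∧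
  (∀ P : Subgroup K, IsPiNumber π (Nat.card P) → ∃ H : Subgroup K, IsPiHall π H ∧ P ≤ H)

/-- If `S ⊴ G`, `G/S ∈ D_π`, every proper subgroup `M` with `S ≤ M < G` satisfies
`E_π`, and `G ∉ E_π`, then `G/S` is a `π`-group. -/
theorem quotient_pi_group_of_minimal_counterexample {G : Type*} [Group G] [Finite G]
    (π : Set ℕ) (S : Subgroup G) [S.Normal]
    (hD : SatisfiesDpi π (G ⧸ S))
    (hmin : ∀ M : Subgroup G, S ≤ M → M ≠ ⊤ → SatisfiesEpi π M)
    (hG : ¬ SatisfiesEpi π G) :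
    IsPiNumber π (Nat.card (G ⧸ S)) := by
  obtain ⟨H, hHcard, hHindex⟩ := hD.1
  set M : Subgroup G := H.comap (QuotientGroup.mk' S) with hM
  have hSM : S ≤ M := fun s hs => by
    have : (QuotientGroup.mk' S) s = 1 := (QuotientGroup.eq_one_iff s).mpr hs
    simpa [hM, Subgroup.mem_comap, this] using H.one_mem
  by_cases htop : M = ⊤
  · have hHtop : H = ⊤ := by
      rw [← Subgroup.map_comap_eq_self_of_surjective
        (QuotientGroup.mk'_surjective S) H, ← hM, htop, Subgroup.map_top_of_surjective _
        (QuotientGroup.mk'_surjective S)]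
    intro p hp hpd
    exact hHcard p hp (by rwa [hHtop, Subgroup.card_top])
  · obtain ⟨K, hKcard, hKindex⟩ := hmin M hSM htop
    exfalso
    apply hG
    refine ⟨K.map M.subtype, ?_, ?_⟩
    · intro p hp hpd
      apply hKcard p hp
      rwa [Nat.card_eq_of_bijective _
        (Subgroup.equivMapOfInjective K M.subtype M.subtype_injective).bijective]
    · intro p hp hpd hpπ
      rw [Subgroup.index_map_subtype] at hpd
      rcases hp.dvd_mul.mp hpd with h | h
      · exact hKindex p hp h hpπ
      · rw [hM, Subgroup.index_comap_of_surjective _ (QuotientGroup.mk'_surjective S)] at h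
        exact hHindex p hp h hpπ
end

section
/- Let G be a finite group acting on a finite nonempty set Ω with every orbit of size at least 2 (no fixed points), where |Ω| = 4. Then there exists an element x ∈ G of order a power of 2 acting on Ω without fixed points. -/
open MulAction

set_option maxRecDepth 10000 in
private lemma perm_fin4_pow_four :
    ∀ σ : Equiv.Perm (Fin 4), (∀ p, σ p ≠ p) → σ ^ 4 = 1 := by decide

private lemma perm_pow_four {Ω : Type*} [Fintype Ω] (hΩ : Fintype.card Ω = 4)
    (σ : Equiv.Perm Ω) (hσ : ∀ p, σ p ≠ p) : σ ^ 4 = 1 := by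
  let e : Ω ≃ Fin 4 := Fintype.equivFinOfCardEq hΩ
  have hmul : ∀ a b : Equiv.Perm Ω, e.permCongr (a * b) = e.permCongr a * e.permCongr b := by
    intro a b; ext x; simp [Equiv.permCongr_apply, Equiv.Perm.mul_apply]
  have hτ : (e.permCongr σ) ^ 4 = 1 := by
    apply perm_fin4_pow_four
    intro x hx
    simp only [Equiv.permCongr_apply] at hx
    have hx' : σ (e.symm x) = e.symm x := by
      have := congrArg e.symm hx; simpa using this
    exact hσ _ hx'
  have h1 : e.permCongr (σ ^ 4) = e.permCongr 1 := by
    have e1 : e.permCongr (1 : Equiv.Perm Ω) = 1 := by ext x; simp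
    have h4 : σ ^ 4 = σ * σ * σ * σ := by
      rw [pow_succ, pow_succ, pow_succ, pow_one]
    have h4' : (e.permCongr σ) ^ 4 = e.permCongr σ * e.permCongr σ * e.permCongr σ * e.permCongr σ := by
      rw [pow_succ, pow_succ, pow_succ, pow_one]
    rw [h4, hmul, hmul, hmul, e1, ← h4', hτ]
  exact (Equiv.permCongr e).injective h1

private lemma exists_derangement {G Ω : Type*} [Group G] [Finite G] [Fintype Ω] [MulAction G Ω]
    (hΩ : Fintype.card Ω = 4) (hfree : ∀ p : Ω, ∃ g : G, g • p ≠ p) :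
    ∃ g : G, ∀ p : Ω, g • p ≠ p := by
  classical
  by_contra hcon
  push_neg at hcon
  by_cases htrans : ∀ p q : Ω, q ∈ orbit G p
  · -- transitive case, via Burnside
    cases nonempty_fintype G
    have hΩpos : Nonempty Ω := Fintype.card_pos_iff.mp (by omega)
    obtain ⟨p₀⟩ := hΩpos
    letI : Fintype (orbitRel.Quotient G Ω) := Fintype.ofFinite _
    letI : ∀ g : G, Fintype (fixedBy Ω g) := fun g => Fintype.ofFinite _
    have hcard1 : Fintype.card (orbitRel.Quotient G Ω) = 1 := by
      haveI hss : Subsingleton (orbitRel.Quotient G Ω) := by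
        constructor
        rintro ⟨x⟩ ⟨y⟩
        exact Quot.sound (htrans y x)
      haveI hne : Nonempty (orbitRel.Quotient G Ω) := ⟨Quotient.mk _ p₀⟩
      have h1 := Fintype.card_le_one_iff_subsingleton.mpr hss
      have h2 := Fintype.card_pos_iff.mpr hne
      omega
    have hsum := MulAction.sum_card_fixedBy_eq_card_orbits_mul_card_group (G := G) (X := Ω)
    rw [hcard1, one_mul] at hsum
    have hfix1 : Fintype.card (fixedBy Ω (1 : G)) = 4 := by
      rw [← hΩ]
      exact Fintype.card_congr (Equiv.subtypeUnivEquiv (fun x => mem_fixedBy.mpr (one_smul G x)))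
    have hpos : ∀ g : G, 1 ≤ Fintype.card (fixedBy Ω g) := by
      intro g
      obtain ⟨p, hp⟩ := hcon g
      exact Fintype.card_pos_iff.mpr ⟨⟨p, mem_fixedBy.mpr hp⟩⟩
    have key : Fintype.card (fixedBy Ω (1 : G)) +
        ∑ x ∈ Finset.univ.erase (1 : G), Fintype.card (fixedBy Ω x) =
        ∑ a : G, Fintype.card (fixedBy Ω a) :=
      Finset.add_sum_erase Finset.univ (fun g : G => Fintype.card (fixedBy Ω g))
        (Finset.mem_univ (1 : G))
    have hlow : (Finset.univ.erase (1 : G)).card • 1 ≤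
        ∑ x ∈ Finset.univ.erase (1 : G), Fintype.card (fixedBy Ω x) :=
      Finset.card_nsmul_le_sum _ _ _ (fun x _ => hpos x)
    rw [smul_eq_mul, mul_one] at hlow
    have hce : (Finset.univ.erase (1 : G)).card = Fintype.card G - 1 := by
      rw [Finset.card_erase_of_mem (Finset.mem_univ _), Finset.card_univ]
    have hGpos : 1 ≤ Fintype.card G := Fintype.card_pos
    rw [hce] at hlow
    rw [hfix1, hsum] at key
    omega
  · -- non-transitive case: two orbits of size 2
    push_neg at htrans
    obtain ⟨p, q, hq⟩ := htrans
    obtain ⟨g₀, hg₀⟩ := hfree p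
    obtain ⟨h₀, hh₀⟩ := hfree q
    have hfinA : (orbit G p).Finite := Set.toFinite _
    have hfinB : (orbit G q).Finite := Set.toFinite _
    have hdisj : Disjoint (orbit G p) (orbit G q) := by
      rw [Set.disjoint_left]
      intro x hxA hxB
      have e1 : orbit G x = orbit G p := orbit_eq_iff.mpr hxA
      have e2 : orbit G x = orbit G q := orbit_eq_iff.mpr hxB
      have hAB : orbit G p = orbit G q := e1.symm.trans e2
      exact hq (by rw [hAB]; exact mem_orbit_self q)
    have hpA : p ∈ orbit G p := mem_orbit_self p
    have hp'A : g₀ • p ∈ orbit G p := mem_orbit_iff.mpr ⟨g₀, rfl⟩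
    have hqB : q ∈ orbit G q := mem_orbit_self q
    have hq'B : h₀ • q ∈ orbit G q := mem_orbit_iff.mpr ⟨h₀, rfl⟩
    have hA2 : 2 ≤ (orbit G p).ncard := (Set.one_lt_ncard_iff hfinA).mpr ⟨_, _, hp'A, hpA, hg₀⟩
    have hB2 : 2 ≤ (orbit G q).ncard := (Set.one_lt_ncard_iff hfinB).mpr ⟨_, _, hq'B, hqB, hh₀⟩
    have huncard : (orbit G p ∪ orbit G q).ncard = (orbit G p).ncard + (orbit G q).ncard :=
      Set.ncard_union_eq hdisj hfinA hfinB
    have hucard : (Set.univ : Set Ω).ncard = 4 := by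
      rw [Set.ncard_univ, Nat.card_eq_fintype_card, hΩ]
    have hle4 : (orbit G p).ncard + (orbit G q).ncard ≤ 4 := by
      rw [← huncard, ← hucard]
      exact Set.ncard_le_ncard (Set.subset_univ _) Set.finite_univ
    have hcA : (orbit G p).ncard = 2 := by omega
    have hcB : (orbit G q).ncard = 2 := by omega
    have huniv : orbit G p ∪ orbit G q = Set.univ := by
      apply Set.eq_of_subset_of_ncard_le (Set.subset_univ _)
      rw [hucard, huncard]; omega
    have hApair : orbit G p = {p, g₀ • p} := by
      symm
      apply Set.eq_of_subset_of_ncard_le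
      · rintro x (rfl | rfl)
        · exact hpA
        · exact hp'A
      · rw [Set.ncard_pair (Ne.symm hg₀), hcA]
      · exact hfinA
    have hBpair : orbit G q = {q, h₀ • q} := by
      symm
      apply Set.eq_of_subset_of_ncard_le
      · rintro x (rfl | rfl)
        · exact hqB
        · exact hq'B
      · rw [Set.ncard_pair (Ne.symm hh₀), hcB]
      · exact hfinB
    have hinv : ∀ (a : Ω) (g : G) (x : Ω), x ∈ orbit G a → g • x ∈ orbit G a := by
      intro a g x hx
      obtain ⟨h, rfl⟩ := mem_orbit_iff.mp hx
      exact mem_orbit_iff.mpr ⟨g * h, mul_smul g h a⟩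
    have swapfact : ∀ (a : Ω) (x y : Ω), x ≠ y → orbit G a = {x, y} → ∀ g : G,
        (g • x = x → g • y = y) ∧ (g • x ≠ x → g • x = y ∧ g • y = x) := by
      intro a x y hxy hS g
      have hx : g • x = x ∨ g • x = y := by
        have h := hinv a g x (by rw [hS]; exact Set.mem_insert x {y})
        rw [hS] at h; simpa using h
      have hy : g • y = x ∨ g • y = y := by
        have h := hinv a g y (by rw [hS]; exact Set.mem_insert_of_mem x rfl)
        rw [hS] at h; simpa using h
      constructor
      · intro h1
        rcases hy with h2 | h2
        · exact absurd (smul_left_cancel_iff g |>.mp (h2.trans h1.symm)) (Ne.symm hxy)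
        · exact h2
      · intro h1
        have hgx : g • x = y := hx.resolve_left h1
        have hgy : g • y = x := by
          rcases hy with h2 | h2
          · exact h2
          · exact absurd (smul_left_cancel_iff g |>.mp (hgx.trans h2.symm)) hxy
        exact ⟨hgx, hgy⟩
    have movesBoth : ∀ z : G, z • p ≠ p → z • q ≠ q → ∀ r : Ω, z • r ≠ r := by
      intro z hzp hzq r
      have hr : r ∈ orbit G p ∪ orbit G q := by rw [huniv]; trivial
      rcases hr with hr | hr
      · rw [hApair] at hr
        rcases hr with rfl | hr
        · exact hzp
        · have hr' : r = g₀ • p := hr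
          have hz := ((swapfact p p (g₀ • p) (Ne.symm hg₀) hApair z).2 hzp).2
          rw [hr', hz]
          exact Ne.symm hg₀
      · rw [hBpair] at hr
        rcases hr with rfl | hr
        · exact hzq
        · have hr' : r = h₀ • q := hr
          have hz := ((swapfact q q (h₀ • q) (Ne.symm hh₀) hBpair z).2 hzq).2
          rw [hr', hz]
          exact Ne.symm hh₀
    by_cases hgq : g₀ • q = q
    · by_cases hhp : h₀ • p = p
      · obtain ⟨r1, hr1⟩ := hcon (g₀ * h₀)
        refine movesBoth (g₀ * h₀) ?_ ?_ r1 hr1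
        · rw [mul_smul, hhp]; exact hg₀
        · rw [mul_smul]
          have hq' : g₀ • (h₀ • q) = h₀ • q :=
            (swapfact q q (h₀ • q) (Ne.symm hh₀) hBpair g₀).1 hgq
          rw [hq']
          exact hh₀
      · obtain ⟨r1, hr1⟩ := hcon h₀
        exact movesBoth h₀ hhp hh₀ r1 hr1
    · obtain ⟨r1, hr1⟩ := hcon g₀
      exact movesBoth g₀ hg₀ hgq r1 hr1

/-- If a finite group `G` acts on a `4`-element set with no point fixed by all of `G`,
then some `x ∈ G` of order a power of `2` acts on `Ω` without fixed points. -/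
theorem exists_two_element_fixed_point_free
    {G Ω : Type*} [Group G] [Finite G] [Fintype Ω] [MulAction G Ω]
    (hΩ : Fintype.card Ω = 4) (hfree : ∀ p : Ω, ∃ g : G, g • p ≠ p) :
    ∃ x : G, (∃ k : ℕ, orderOf x = 2 ^ k) ∧ ∀ p : Ω, x • p ≠ p := by
  obtain ⟨g, hg⟩ := exists_derangement hΩ hfree
  have h4 : ∀ s : Ω, g ^ 4 • s = s := by
    have hperm : (MulAction.toPermHom G Ω g) ^ 4 = 1 :=
      perm_pow_four hΩ _ (fun s => by simpa using hg s)
    intro s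
    have := DFunLike.congr_fun ((map_pow (MulAction.toPermHom G Ω) g 4).trans hperm) s
    simpa using this
  have hnpos : 0 < orderOf g := orderOf_pos g
  have hcdvd : (orderOf g) / 2 ^ (orderOf g).factorization 2 ∣ orderOf g :=
    Nat.ordCompl_dvd (orderOf g) 2
  have hcpos : 0 < (orderOf g) / 2 ^ (orderOf g).factorization 2 :=
    Nat.ordCompl_pos 2 (by omega)
  have hodd : ¬ 2 ∣ (orderOf g) / 2 ^ (orderOf g).factorization 2 :=
    Nat.not_dvd_ordCompl Nat.prime_two (by omega)
  refine ⟨g ^ ((orderOf g) / 2 ^ (orderOf g).factorization 2),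
    ⟨(orderOf g).factorization 2, ?_⟩, ?_⟩
  · rw [orderOf_pow, Nat.gcd_eq_right hcdvd]
    exact Nat.div_eq_of_eq_mul_left hcpos (Nat.ordProj_mul_ordCompl_eq_self (orderOf g) 2).symm
  · generalize hc : (orderOf g) / 2 ^ (orderOf g).factorization 2 = c at hcdvd hcpos hodd ⊢
    intro r hr
    have hcop : Nat.Coprime c 4 := by
      have h2 : Nat.Coprime c 2 :=
        Nat.coprime_comm.mp ((Nat.prime_two.coprime_iff_not_dvd).mpr hodd)
      have h42 : (4 : ℕ) = 2 ^ 2 := by norm_num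
      rw [h42]
      exact Nat.Coprime.pow_right 2 h2
    obtain ⟨u, hu⟩ := Nat.exists_mul_mod_eq_one_of_coprime hcop (by norm_num)
    have hdecomp : c * u = 1 + 4 * (c * u / 4) := by omega
    have hpow : ∀ m : ℕ, (g ^ c) ^ m • r = r := by
      intro m
      induction m with
      | zero => simp
      | succ m ih => rw [pow_succ, mul_smul, hr, ih]
    have h1 : g ^ (c * u) • r = r := by rw [pow_mul]; exact hpow u
    have h2 : ∀ t : ℕ, g ^ (4 * t) • r = r := by
      intro t
      induction t with
      | zero => simp
      | succ t ih =>
        have h41 : 4 * (t + 1) = 4 * t + 4 := by ring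
        rw [h41, pow_add, mul_smul, h4, ih]
    have h3 : g ^ (c * u) • r = g • r := by
      rw [hdecomp, pow_add, pow_one, mul_smul, h2]
    exact hg r (h3.symm.trans h1)
end
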